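/- For integers q = p^r (p prime, r ≥ 1) and 0 ≤ t < q, define h_t^{(q)}(x) = ∑_{k=t}^{q-1} (-1)^{k-t} C(k,t) C(x,k). Then for every integer m, h_t^{(q)}(m) ≡ 1 (mod p) if m ≡ t (mod q), and h_t^{(q)}(m) ≡ 0 (mod p) otherwise. -/

import Mathlib

open Finset

/-- One-step periodicity of `Ring.choose` mod `p`. -/
lemma aux_period (p : ℕ) (hp : p.Prime) (q k : ℕ) (hkq : k < q)
    (hdvd : ∀ j, j ≠ 0 → j ≤ k → p ∣ q.choose j) (m : ℤ) :
    Ring.choose (m + (q : ℤ)) k ≡ Ring.choose m k [ZMOD (p : ℤ)] := by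
  rw [Ring.add_choose_eq k (Commute.all _ _)]
  have hmem : ((k, 0) : ℕ × ℕ) ∈ Finset.HasAntidiagonal.antidiagonal k := by simp
  rw [← Finset.add_sum_erase _ _ hmem]
  have h0 : Ring.choose m k * Ring.choose ((q : ℤ)) 0 = Ring.choose m k := by
    simp
  rw [h0]
  have hs : (∑ ij ∈ (Finset.HasAntidiagonal.antidiagonal k).erase (k, 0),
      Ring.choose m ij.1 * Ring.choose ((q : ℤ)) ij.2) ≡ 0 [ZMOD (p : ℤ)] := by
    rw [Int.modEq_zero_iff_dvd]
    apply Finset.dvd_sum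
    intro ij hij
    rcases Finset.mem_erase.mp hij with ⟨hne, hmem'⟩
    rw [Finset.HasAntidiagonal.mem_antidiagonal] at hmem'
    have hj0 : ij.2 ≠ 0 := by
      intro h
      exact hne (Prod.ext (by omega) h)
    have hjk : ij.2 ≤ k := by omega
    rw [Ring.choose_natCast (R := ℤ) q ij.2]
    exact Dvd.dvd.mul_left (Int.natCast_dvd_natCast.mpr (hdvd _ hj0 hjk)) _
  calc Ring.choose m k + _ ≡ Ring.choose m k + 0 [ZMOD (p:ℤ)] := Int.ModEq.add_left _ hs
    _ = Ring.choose m k := by ring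

/-- Iterated periodicity. -/
lemma aux_period_mul (p : ℕ) (hp : p.Prime) (q k : ℕ) (hkq : k < q)
    (hdvd : ∀ j, j ≠ 0 → j ≤ k → p ∣ q.choose j) (x : ℤ) (s : ℤ) :
    Ring.choose (x + (q : ℤ) * s) k ≡ Ring.choose x k [ZMOD (p : ℤ)] := by
  induction s using Int.induction_on with
  | zero => simp
  | succ n ih =>
      have h1 : x + (q : ℤ) * (n + 1) = (x + (q : ℤ) * n) + q := by ring
      rw [h1]
      exact (aux_period p hp q k hkq hdvd _).trans ih
  | pred n ih =>
      have h1 : (x + (q : ℤ) * (-(n : ℤ) - 1)) + q = x + (q : ℤ) * (-(n : ℤ)) := by ring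
      have h2 := aux_period p hp q k hkq hdvd (x + (q : ℤ) * (-(n : ℤ) - 1))
      rw [h1] at h2
      exact h2.symm.trans ih

/-- Sums respect `Int.ModEq` termwise. -/
lemma aux_sum_modeq {n : ℕ} {s : Finset ℕ} (f g : ℕ → ℤ)
    (h : ∀ i ∈ s, f i ≡ g i [ZMOD (n : ℤ)]) :
    (∑ i ∈ s, f i) ≡ (∑ i ∈ s, g i) [ZMOD (n : ℤ)] := by
  rw [← ZMod.intCast_eq_intCast_iff]
  push_cast
  exact Finset.sum_congr rfl fun i hi => (ZMod.intCast_eq_intCast_iff _ _ _).mpr (h i hi)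

/-- The exact integer identity for `0 ≤ m0 < q`. -/
lemma aux_key (q t : ℕ) (ht : t < q) (m0 : ℕ) (hm0 : m0 < q) :
    (∑ k ∈ Finset.Icc t (q - 1), (-1 : ℤ) ^ (k - t) * (k.choose t : ℤ) * (m0.choose k : ℤ))
      = if m0 = t then 1 else 0 := by
  have hicc : Finset.Icc t (q - 1) = Finset.Ico t q := by
    rw [← Finset.Ico_add_one_right_eq_Icc]
    congr 1
    omega
  rw [hicc, Finset.sum_Ico_eq_sum_range]
  by_cases hlt : m0 < t
  · rw [if_neg (by omega)]
    apply Finset.sum_eq_zero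
    intro i _
    have h : m0.choose (t + i) = 0 := Nat.choose_eq_zero_of_lt (by omega)
    simp [h]
  · push_neg at hlt
    set n := m0 - t with hn
    have hstep : ∀ i ∈ Finset.range (q - t),
        (-1 : ℤ) ^ (t + i - t) * ((t + i).choose t : ℤ) * (m0.choose (t + i) : ℤ)
        = (m0.choose t : ℤ) * ((-1 : ℤ) ^ i * (n.choose i : ℤ)) := by
      intro i _
      have hi : t + i - t = i := by omega
      rw [hi]
      by_cases hle : t + i ≤ m0
      · have hcm := Nat.choose_mul (n := m0) (k := t + i) (s := t) (by omega)
        have h2 : t + i - t = i := by omega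
        rw [h2] at hcm
        have hcast : ((t + i).choose t : ℤ) * (m0.choose (t + i) : ℤ)
            = (m0.choose t : ℤ) * (n.choose i : ℤ) := by
          rw [mul_comm]
          exact_mod_cast congrArg (Nat.cast : ℕ → ℤ) hcm
        rw [mul_assoc, hcast]; ring
      · have h1 : m0.choose (t + i) = 0 := Nat.choose_eq_zero_of_lt (by omega)
        have h2 : n.choose i = 0 := Nat.choose_eq_zero_of_lt (by omega)
        simp [h1, h2]
    rw [Finset.sum_congr rfl hstep, ← Finset.mul_sum]
    have hsub : Finset.range (n + 1) ⊆ Finset.range (q - t) :=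
      Finset.range_subset_range.mpr (by omega)
    have hext : (∑ i ∈ Finset.range (q - t), (-1 : ℤ) ^ i * (n.choose i : ℤ))
        = ∑ i ∈ Finset.range (n + 1), (-1 : ℤ) ^ i * (n.choose i : ℤ) := by
      rw [← Finset.sum_subset hsub]
      intro i _ hi
      rw [Finset.mem_range, not_lt] at hi
      have h : n.choose i = 0 := Nat.choose_eq_zero_of_lt (by omega)
      simp [h]
    rw [hext, Int.alternating_sum_range_choose]
    by_cases heq : m0 = t
    · have hn0 : n = 0 := by omega
      rw [if_pos heq, if_pos hn0, heq]
      simp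
    · have hn0 : n ≠ 0 := by omega
      rw [if_neg heq, if_neg hn0, mul_zero]

/-- For `q = p^r` (`p` prime, `r ≥ 1`) and `0 ≤ t < q`, with
`h_t^{(q)}(x) = ∑_{k=t}^{q-1} (-1)^{k-t} C(k,t) C(x,k)` (generalized binomial `C(x,k)`),
for every integer `m`: `h_t^{(q)}(m) ≡ 1 (mod p)` if `m ≡ t (mod q)`, else `≡ 0 (mod p)`. -/
theorem stmt_0 (p r : ℕ) (hp : p.Prime) (hr : 1 ≤ r) (q : ℕ) (hq : q = p ^ r)
    (t : ℕ) (ht : t < q) (m : ℤ) :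
    (m ≡ (t : ℤ) [ZMOD (q : ℤ)] →
      (∑ k ∈ Finset.Icc t (q - 1), (-1) ^ (k - t) * (k.choose t : ℤ) * Ring.choose m k)
        ≡ 1 [ZMOD (p : ℤ)]) ∧
    (¬ m ≡ (t : ℤ) [ZMOD (q : ℤ)] →
      (∑ k ∈ Finset.Icc t (q - 1), (-1) ^ (k - t) * (k.choose t : ℤ) * Ring.choose m k)
        ≡ 0 [ZMOD (p : ℤ)]) := by
  have hq0 : 0 < q := by rw [hq]; exact pow_pos hp.pos r
  have hdvd : ∀ j, j ≠ 0 → j < q → p ∣ q.choose j := by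
    intro j hj0 hj1
    subst hq
    exact Nat.Prime.dvd_choose_pow hp hj0 (by omega)
  set m0 : ℕ := (m % q).toNat with hm0def
  have hmodnn : 0 ≤ m % q := Int.emod_nonneg m (by exact_mod_cast hq0.ne')
  have hmodlt : m % q < q := Int.emod_lt_of_pos m (by exact_mod_cast hq0)
  have hm0 : (m0 : ℤ) = m % q := Int.toNat_of_nonneg hmodnn
  have hm0lt : m0 < q := by omega
  have hdecomp : m = (m0 : ℤ) + (q : ℤ) * (m / q) := by
    rw [hm0, Int.emod_add_mul_ediv m q]
  have hterm : ∀ k ∈ Finset.Icc t (q - 1),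
      (-1 : ℤ) ^ (k - t) * (k.choose t : ℤ) * Ring.choose m k
        ≡ (-1 : ℤ) ^ (k - t) * (k.choose t : ℤ) * Ring.choose ((m0 : ℤ)) k [ZMOD (p : ℤ)] := by
    intro k hk
    rw [Finset.mem_Icc] at hk
    have hkq : k < q := by omega
    have h := aux_period_mul p hp q k hkq (fun j hj0 hjk => hdvd j hj0 (by omega))
      ((m0 : ℤ)) (m / q)
    rw [← hdecomp] at h
    exact h.mul_left _
  have hsum := aux_sum_modeq (n := p) _ _ hterm
  have hval : (∑ k ∈ Finset.Icc t (q - 1),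
      (-1 : ℤ) ^ (k - t) * (k.choose t : ℤ) * Ring.choose ((m0 : ℤ)) k)
      = if m0 = t then 1 else 0 := by
    rw [← aux_key q t ht m0 hm0lt]
    exact Finset.sum_congr rfl fun k _ => by rw [Ring.choose_natCast]
  rw [hval] at hsum
  have h1 : m ≡ (m0 : ℤ) [ZMOD (q : ℤ)] := by
    rw [Int.ModEq, hm0, Int.emod_emod_of_dvd _ dvd_rfl]
  have hiff : m ≡ (t : ℤ) [ZMOD (q : ℤ)] ↔ m0 = t := by
    constructor
    · intro h
      have h2 := h1.symm.trans h
      rw [Int.ModEq, Int.emod_eq_of_lt (Int.natCast_nonneg m0) (by exact_mod_cast hm0lt),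
        Int.emod_eq_of_lt (Int.natCast_nonneg t) (by exact_mod_cast ht)] at h2
      exact_mod_cast h2
    · intro h
      exact h ▸ h1
  constructor
  · intro h
    rw [hiff] at h
    rw [if_pos h] at hsum
    exact hsum
  · intro h
    rw [hiff] at h
    rw [if_neg h] at hsum
    exact hsum
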